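/- For every s > 0, the set of x ∈ (0,1] for which Σₙ dₙ(x)^{−s} diverges is comeager in (0,1]. -/
import Mathlib


/-- The first Engel digit `d₁(x) = ⌊1/x⌋ + 1`. -/
noncomputable def engelD1 (x : ℝ) : ℕ := ⌊1 / x⌋₊ + 1

/-- The Engel map `T(x) = d₁(x)·x − 1`. -/
noncomputable def engelT (x : ℝ) : ℝ := (engelD1 x : ℝ) * x - 1

/-- The `n`-th Engel digit (0-indexed): `dₙ₊₁(x) = d₁(Tⁿ(x))`. -/
noncomputable def engelDigit (x : ℝ) (n : ℕ) : ℕ := engelD1 (engelT^[n] x)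

lemma engelD1_gt {x : ℝ} (_hx : 0 < x) : 1 / x < (engelD1 x : ℝ) := by
  have := Nat.lt_floor_add_one (1 / x)
  rw [engelD1]; push_cast; linarith

lemma engelD1_le {x : ℝ} (hx : 0 < x) : (engelD1 x : ℝ) ≤ 1 / x + 1 := by
  have := Nat.floor_le (le_of_lt (by positivity : (0:ℝ) < 1 / x))
  rw [engelD1]; push_cast; linarith

lemma engelT_mem {x : ℝ} (hx : x ∈ Set.Ioc (0:ℝ) 1) : engelT x ∈ Set.Ioc (0:ℝ) x := by
  obtain ⟨hx0, hx1⟩ := hx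
  constructor
  · have h := engelD1_gt hx0
    have : 1 / x * x < (engelD1 x : ℝ) * x := by
      exact mul_lt_mul_of_pos_right h hx0
    rw [one_div, inv_mul_cancel₀ (ne_of_gt hx0)] at this
    simpa [engelT] using this
  · have h := engelD1_le hx0
    have : (engelD1 x : ℝ) * x ≤ (1 / x + 1) * x := by
      exact mul_le_mul_of_nonneg_right h (le_of_lt hx0)
    rw [add_mul, one_div, inv_mul_cancel₀ (ne_of_gt hx0), one_mul] at this
    simp only [engelT]; linarith

lemma engelT_iter_mem {x : ℝ} (hx : x ∈ Set.Ioc (0:ℝ) 1) (n : ℕ) :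
    engelT^[n] x ∈ Set.Ioc (0:ℝ) 1 := by
  induction n with
  | zero => simpa using hx
  | succ n ih =>
      rw [Function.iterate_succ_apply']
      have := engelT_mem ih
      exact ⟨this.1, this.2.trans ih.2⟩

lemma engelDigit_succ (x : ℝ) (n : ℕ) :
    engelDigit x (n + 1) = engelDigit (engelT x) n := by
  simp [engelDigit, Function.iterate_succ_apply]

/-- If `q·x` is an integer, so is `q·Tⁿ(x)`. -/
lemma engelT_iter_int {x : ℝ} {q : ℕ} (hk : ∃ k : ℤ, (q:ℝ) * x = (k:ℝ)) (n : ℕ) :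
    ∃ k : ℤ, (q:ℝ) * (engelT^[n] x) = (k:ℝ) := by
  induction n with
  | zero => simpa using hk
  | succ n ih =>
      obtain ⟨k, hk⟩ := ih
      refine ⟨(engelD1 (engelT^[n] x) : ℤ) * k - q, ?_⟩
      rw [Function.iterate_succ_apply', engelT]
      push_cast
      linear_combination ((engelD1 (engelT^[n] x)):ℝ) * hk

/-- Digits of a rational `p/q` are bounded by `q + 1`. -/
lemma engelDigit_le_of_rat {x : ℝ} (hx : x ∈ Set.Ioc (0:ℝ) 1) {q : ℕ} (hq : 0 < q)
    (hk : ∃ k : ℤ, (q:ℝ) * x = (k:ℝ)) (n : ℕ) : engelDigit x n ≤ q + 1 := by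
  obtain ⟨k, hk⟩ := engelT_iter_int hk n
  have hmem := engelT_iter_mem hx n
  have hq' : (0:ℝ) < q := Nat.cast_pos.2 hq
  have hk1 : (1:ℝ) ≤ (k:ℝ) := by
    have : (0:ℝ) < (k:ℝ) := hk ▸ mul_pos hq' hmem.1
    exact_mod_cast (by exact_mod_cast this : (0:ℤ) < k)
  have hinv : 1 / (engelT^[n] x) ≤ (q:ℝ) := by
    rw [div_le_iff₀ hmem.1, hk]
    linarith
  have : (engelDigit x n : ℝ) < (q:ℝ) + 1 + 1 := by
    calc (engelDigit x n : ℝ) = (engelD1 (engelT^[n] x) : ℝ) := rfl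
    _ ≤ 1 / (engelT^[n] x) + 1 := engelD1_le hmem.1
    _ ≤ (q:ℝ) + 1 := by linarith
    _ < (q:ℝ) + 1 + 1 := by linarith
  exact_mod_cast Nat.lt_add_one_iff.mp (by exact_mod_cast this)

lemma two_le_engelDigit {x : ℝ} (hx : x ∈ Set.Ioc (0:ℝ) 1) (n : ℕ) :
    2 ≤ engelDigit x n := by
  have hmem := engelT_iter_mem hx n
  have h1 : (1:ℝ) ≤ 1 / (engelT^[n] x) := by
    rw [le_div_iff₀ hmem.1, one_mul]; exact hmem.2
  have : (1:ℝ) < (engelDigit x n : ℝ) := lt_of_le_of_lt h1 (engelD1_gt hmem.1)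
  have : 1 < engelDigit x n := by exact_mod_cast this
  omega

/-- Left local constancy of the first `k` digits. -/
lemma engelDigit_left_const (k : ℕ) :
    ∀ x ∈ Set.Ioc (0:ℝ) 1, ∃ a, 0 ≤ a ∧ a < x ∧
      ∀ y ∈ Set.Ioc a x, ∀ n < k, engelDigit y n = engelDigit x n := by
  induction k with
  | zero => intro x hx; exact ⟨0, le_refl _, hx.1, fun y _ n hn => absurd hn (Nat.not_lt_zero n)⟩
  | succ k ih =>
      intro x hx
      have hTx := engelT_mem hx
      obtain ⟨a', ha'0, ha'lt, ha'⟩ := ih (engelT x) ⟨hTx.1, hTx.2.trans hx.2⟩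
      set m : ℕ := ⌊1 / x⌋₊ with hm
      have hmx : (m:ℝ) ≤ 1 / x := Nat.floor_le (le_of_lt (one_div_pos.mpr hx.1))
      have hd1 : (engelD1 x : ℝ) = (m:ℝ) + 1 := by rw [engelD1]; push_cast; rfl
      have hmpos : (0:ℝ) < (m:ℝ) + 1 := by positivity
      refine ⟨max (1 / ((m:ℝ) + 1)) ((a' + 1) / ((m:ℝ) + 1)), ?_, ?_, ?_⟩
      · exact le_max_of_le_left (div_nonneg zero_le_one (le_of_lt hmpos))
      · apply max_lt
        · rw [div_lt_iff₀ hmpos]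
          have := engelD1_gt hx.1
          rw [hd1] at this
          calc (1:ℝ) = 1 / x * x := (one_div_mul_cancel (ne_of_gt hx.1)).symm
          _ < ((m:ℝ) + 1) * x := mul_lt_mul_of_pos_right this hx.1
          _ = x * ((m:ℝ) + 1) := mul_comm _ _
        · rw [div_lt_iff₀ hmpos]
          have : a' < engelT x := ha'lt
          rw [engelT, hd1] at this
          linarith [this]
      · intro y hy n hn
        have hy1 : 1 / ((m:ℝ) + 1) < y := lt_of_le_of_lt (le_max_left _ _) hy.1
        have hy2 : (a' + 1) / ((m:ℝ) + 1) < y := lt_of_le_of_lt (le_max_right _ _) hy.1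
        have hy0 : 0 < y := lt_trans (by positivity) hy1
        have hfloor : ⌊1 / y⌋₊ = m := by
          rw [Nat.floor_eq_iff (by positivity)]
          constructor
          · calc (m:ℝ) ≤ 1 / x := hmx
            _ ≤ 1 / y := by apply one_div_le_one_div_of_le hy0 hy.2
          · rw [div_lt_iff₀ hy0]
            calc (1:ℝ) = 1 / ((m:ℝ) + 1) * ((m:ℝ) + 1) := (one_div_mul_cancel (ne_of_gt hmpos)).symm
            _ < y * ((m:ℝ) + 1) := mul_lt_mul_of_pos_right hy1 hmpos
            _ = ((m:ℝ) + 1) * y := mul_comm _ _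
        have hd1y : (engelD1 y : ℝ) = (m:ℝ) + 1 := by
          rw [engelD1, hfloor]; push_cast; rfl
        have hTy : engelT y ∈ Set.Ioc a' (engelT x) := by
          constructor
          · rw [engelT, hd1y]
            have := (div_lt_iff₀ hmpos).mp hy2
            linarith
          · rw [engelT, engelT, hd1y, hd1]
            have : ((m:ℝ) + 1) * y ≤ ((m:ℝ) + 1) * x :=
              mul_le_mul_of_nonneg_left hy.2 (le_of_lt hmpos)
            linarith
        cases n with
        | zero =>
            show engelD1 y = engelD1 x
            have : engelD1 y = m + 1 := by exact_mod_cast hd1y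
            have hx' : engelD1 x = m + 1 := by exact_mod_cast hd1
            rw [this, hx']
        | succ n =>
            rw [engelDigit_succ, engelDigit_succ]
            exact ha' (engelT y) hTy n (Nat.lt_of_succ_lt_succ hn)

/-- For every `s > 0`, the set of `x ∈ (0,1]` with `Σₙ dₙ(x)^{−s} = ∞` is comeager in
`(0,1]`; equivalently, its complement (the summability set) is meager. -/
theorem divergence_set_power_comeager (s : ℝ) (hs : 0 < s) :
    IsMeagre {x : Set.Ioc (0 : ℝ) 1 |
      Summable fun n : ℕ => ((engelDigit (x : ℝ) n : ℝ)) ^ (-s)} := by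
  classical
  set A : ℕ → Set (Set.Ioc (0:ℝ) 1) := fun M =>
    {x | ∀ k, ∑ n ∈ Finset.range k, ((engelDigit (x:ℝ) n : ℝ)) ^ (-s) ≤ M} with hA
  rw [isMeagre_iff_countable_union_isNowhereDense]
  refine ⟨Set.range A, ?_, Set.countable_range A, ?_⟩
  · -- each A M is nowhere dense
    rintro t ⟨M, rfl⟩
    rw [IsNowhereDense, interior_eq_empty_iff_dense_compl]
    rw [dense_iff_inter_open]
    rintro U hU ⟨⟨x, hxmem⟩, hxU⟩
    rw [isOpen_induced_iff] at hU
    obtain ⟨V, hV, rfl⟩ := hU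
    have hxV : x ∈ V := hxU
    obtain ⟨ε, hε, hball⟩ := Metric.isOpen_iff.mp hV x hxV
    -- pick a rational r in (max 0 (x-ε), x)
    have hlt : max 0 (x - ε) < x := max_lt hxmem.1 (by linarith)
    obtain ⟨r, hr1, hr2⟩ := exists_rat_btwn hlt
    have hr0 : (0:ℝ) < (r:ℝ) := lt_of_le_of_lt (le_max_left _ _) hr1
    have hrx : (r:ℝ) < x := hr2
    have hrmem : (r:ℝ) ∈ Set.Ioc (0:ℝ) 1 := ⟨hr0, le_of_lt (lt_of_lt_of_le hrx hxmem.2)⟩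
    -- digits of r are bounded by r.den + 1
    have hint : ∃ k : ℤ, ((r.den : ℕ) : ℝ) * (r:ℝ) = (k:ℝ) := by
      refine ⟨r.num, ?_⟩
      rw [mul_comm]
      exact_mod_cast Rat.mul_den_eq_num r
    have hdig : ∀ n, engelDigit (r:ℝ) n ≤ r.den + 1 :=
      engelDigit_le_of_rat hrmem r.pos hint
    -- partial sums of r are unbounded: find K with sum > M
    set c : ℝ := ((r.den : ℝ) + 1) ^ (-s) with hc
    have hB : (0:ℝ) < (r.den : ℝ) + 1 := by positivity
    have hcpos : 0 < c := Real.rpow_pos_of_pos hB _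
    obtain ⟨K, hK⟩ := Archimedean.arch ((M:ℝ) + 1) hcpos
    have hsum : (M:ℝ) < ∑ n ∈ Finset.range K, ((engelDigit (r:ℝ) n : ℝ)) ^ (-s) := by
      have hterm : ∀ n ∈ Finset.range K, c ≤ ((engelDigit (r:ℝ) n : ℝ)) ^ (-s) := by
        intro n _
        have h2 : (0:ℝ) < (engelDigit (r:ℝ) n : ℝ) := by
          have := two_le_engelDigit hrmem n
          exact_mod_cast Nat.lt_of_lt_of_le (by norm_num) this
        have hle : ((engelDigit (r:ℝ) n : ℝ)) ≤ (r.den : ℝ) + 1 := by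
          exact_mod_cast hdig n
        rw [hc, Real.rpow_neg (le_of_lt hB), Real.rpow_neg (le_of_lt h2)]
        apply inv_anti₀ (Real.rpow_pos_of_pos h2 _)
        exact Real.rpow_le_rpow (le_of_lt h2) hle (le_of_lt hs)
      calc (M:ℝ) < (M:ℝ) + 1 := by linarith
      _ ≤ K • c := hK
      _ = ∑ _n ∈ Finset.range K, c := by rw [Finset.sum_const, Finset.card_range]
      _ ≤ _ := Finset.sum_le_sum hterm
    -- locally constant digits to the left of r
    obtain ⟨a, ha0, har, ha⟩ := engelDigit_left_const K (r:ℝ) hrmem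
    set a₂ : ℝ := max a (x - ε) with ha₂
    have ha₂r : a₂ < (r:ℝ) := max_lt har (lt_of_le_of_lt (le_max_right 0 _) hr1)
    set y : ℝ := (a₂ + (r:ℝ)) / 2 with hy
    have hya : a₂ < y := by rw [hy]; linarith
    have hyr : y < (r:ℝ) := by rw [hy]; linarith
    have hy0 : 0 < y := lt_of_le_of_lt (le_trans ha0 (le_max_left a (x - ε))) hya
    have hymem : y ∈ Set.Ioc (0:ℝ) 1 := ⟨hy0, le_of_lt (lt_of_lt_of_le (lt_trans hyr (lt_of_lt_of_le hrx hxmem.2)) le_rfl)⟩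
    have hyV : y ∈ V := by
      apply hball
      rw [Metric.mem_ball, Real.dist_eq, abs_lt]
      constructor
      · have : x - ε < y := lt_of_le_of_lt (le_max_right a (x - ε)) hya
        linarith
      · have : y < x := lt_trans hyr hrx
        linarith
    -- the open set W around y, disjoint from A M
    set W : Set (Set.Ioc (0:ℝ) 1) := Subtype.val ⁻¹' (Set.Ioo a₂ (r:ℝ)) with hW
    have hWopen : IsOpen W := isOpen_Ioo.preimage continuous_subtype_val
    have hWdisj : W ∩ A M = ∅ := by
      ext ⟨z, hz⟩
      simp only [Set.mem_inter_iff, Set.mem_empty_iff_false, iff_false, not_and]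
      intro hzW hzA
      have hzIoc : z ∈ Set.Ioc a (r:ℝ) :=
        ⟨lt_of_le_of_lt (le_max_left a (x - ε)) hzW.1, le_of_lt hzW.2⟩
      have heq : ∑ n ∈ Finset.range K, ((engelDigit z n : ℝ)) ^ (-s)
          = ∑ n ∈ Finset.range K, ((engelDigit (r:ℝ) n : ℝ)) ^ (-s) := by
        apply Finset.sum_congr rfl
        intro n hn
        rw [ha z hzIoc n (Finset.mem_range.mp hn)]
      have := hzA K
      rw [heq] at this
      linarith
    refine ⟨⟨y, hymem⟩, hyV, ?_⟩
    intro hcl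
    have : closure (A M) ⊆ Wᶜ := by
      apply closure_minimal _ (hWopen.isClosed_compl)
      intro z hz hzW
      have : z ∈ W ∩ A M := ⟨hzW, hz⟩
      rw [hWdisj] at this
      exact this
    exact this hcl ⟨hya, hyr⟩
  · -- the summable set is covered by ⋃ A M
    intro x hx
    simp only [Set.mem_setOf_eq] at hx
    have hnonneg : ∀ n, 0 ≤ ((engelDigit (x:ℝ) n : ℝ)) ^ (-s) := fun n =>
      Real.rpow_nonneg (Nat.cast_nonneg _) _
    refine Set.mem_sUnion.mpr ⟨A ⌈∑' n, ((engelDigit (x:ℝ) n : ℝ)) ^ (-s)⌉₊,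
      ⟨_, rfl⟩, ?_⟩
    intro k
    calc ∑ n ∈ Finset.range k, ((engelDigit (x:ℝ) n : ℝ)) ^ (-s)
        ≤ ∑' n, ((engelDigit (x:ℝ) n : ℝ)) ^ (-s) :=
          Summable.sum_le_tsum _ (fun n _ => hnonneg n) hx
      _ ≤ ⌈∑' n, ((engelDigit (x:ℝ) n : ℝ)) ^ (-s)⌉₊ := Nat.le_ceil _
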